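/- Maximal concurrence of the reduced spin–spin state in the Li et al. circuit: with a = (e^{iα} + e^{iβ})/(2√2), b = i(e^{iα} − e^{iβ})/(2√2) for real α, β, let ψ = a·(|00⟩ − |11⟩) + b·(|01⟩ + |10⟩), ρ = |ψ⟩⟨ψ|, and ρ̃ = (σ_y ⊗ σ_y)·ρ̄·(σ_y ⊗ σ_y), where ρ̄ is the entrywise complex conjugate and σ_y = [[0, −i], [i, 0]]. Then the 4×4 matrix ρ·ρ̃ has trace 1 and rank at most 1; equivalently its eigenvalues are {1, 0, 0, 0}, so the Wootters concurrence of ρ equals 1. -/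

import Mathlib

open Kronecker

/-- Maximal concurrence of the reduced spin–spin state in the Li et al. circuit: with
a = (e^{iα}+e^{iβ})/(2√2), b = i(e^{iα}−e^{iβ})/(2√2), ψ = a(|00⟩−|11⟩)+b(|01⟩+|10⟩),
ρ = |ψ⟩⟨ψ| and ρ̃ = (σ_y⊗σ_y)·ρ̄·(σ_y⊗σ_y), the matrix ρ·ρ̃ has trace 1 and rank at
most 1 (so its eigenvalues are {1,0,0,0} and the Wootters concurrence of ρ is 1). -/
theorem li_circuit_concurrence_one (α β : ℝ)
    (a b : ℂ)
    (ha : a = (Complex.exp ((α : ℂ) * Complex.I) + Complex.exp ((β : ℂ) * Complex.I)) /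
      (2 * (Real.sqrt 2 : ℂ)))
    (hb : b = Complex.I * (Complex.exp ((α : ℂ) * Complex.I) -
      Complex.exp ((β : ℂ) * Complex.I)) / (2 * (Real.sqrt 2 : ℂ)))
    (ψ : Fin 2 × Fin 2 → ℂ)
    (hψ : ψ = fun p => ![![a, b], ![b, -a]] p.1 p.2)
    (ρ : Matrix (Fin 2 × Fin 2) (Fin 2 × Fin 2) ℂ)
    (hρ : ρ = Matrix.of fun p q => ψ p * (starRingEnd ℂ) (ψ q))
    (σy : Matrix (Fin 2) (Fin 2) ℂ)
    (hσy : σy = !![0, -Complex.I; Complex.I, 0])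
    (ρt : Matrix (Fin 2 × Fin 2) (Fin 2 × Fin 2) ℂ)
    (hρt : ρt = (σy ⊗ₖ σy) * ρ.map (starRingEnd ℂ) * (σy ⊗ₖ σy)) :
    Matrix.trace (ρ * ρt) = 1 ∧ (ρ * ρt).rank ≤ 1 := by
  constructor
  · -- trace
    have hkey : (a ^ 2 + b ^ 2) * ((starRingEnd ℂ) a ^ 2 + (starRingEnd ℂ) b ^ 2) = 1 / 4 := by
      have hs : ((Real.sqrt 2 : ℂ)) * ((Real.sqrt 2 : ℂ)) = 2 := by
        rw [← Complex.ofReal_mul, Real.mul_self_sqrt (by norm_num)]; norm_num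
      have hs0 : ((Real.sqrt 2 : ℂ)) ≠ 0 := by
        intro h; rw [h] at hs; norm_num at hs
      have hsa : (starRingEnd ℂ) a = (Complex.exp (-((α : ℂ) * Complex.I)) +
          Complex.exp (-((β : ℂ) * Complex.I))) / (2 * (Real.sqrt 2 : ℂ)) := by
        rw [ha]
        simp [map_div₀, map_add, map_mul, ← Complex.exp_conj, Complex.conj_ofReal, map_ofNat]
      have hsb : (starRingEnd ℂ) b = -Complex.I * (Complex.exp (-((α : ℂ) * Complex.I)) -
          Complex.exp (-((β : ℂ) * Complex.I))) / (2 * (Real.sqrt 2 : ℂ)) := by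
        rw [hb]
        simp [map_div₀, map_sub, map_mul, ← Complex.exp_conj, Complex.conj_ofReal, map_ofNat]
      set Ea := Complex.exp ((α : ℂ) * Complex.I) with hEa
      set Eb := Complex.exp ((β : ℂ) * Complex.I) with hEb
      set Fa := Complex.exp (-((α : ℂ) * Complex.I)) with hFa
      set Fb := Complex.exp (-((β : ℂ) * Complex.I)) with hFb
      have hA : a ^ 2 + b ^ 2 = Ea * Eb / 2 := by
        rw [ha, hb]
        field_simp
        linear_combination (-(2:ℂ) * Ea * Eb) * hs +
          (Ea ^ 2 + Eb ^ 2 - 2 * Ea * Eb) * Complex.I_sq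
      have hB : (starRingEnd ℂ) a ^ 2 + (starRingEnd ℂ) b ^ 2 = Fa * Fb / 2 := by
        rw [hsa, hsb]
        field_simp
        linear_combination (-(2:ℂ) * Fa * Fb) * hs +
          (Fa ^ 2 + Fb ^ 2 - 2 * Fa * Fb) * Complex.I_sq
      have e1 : Ea * Fa = 1 := by rw [hEa, hFa, ← Complex.exp_add]; simp
      have e2 : Eb * Fb = 1 := by rw [hEb, hFb, ← Complex.exp_add]; simp
      rw [hA, hB]
      field_simp
      linear_combination (4:ℂ) * Eb * Fb * e1 + 4 * e2
    simp only [hρ, hρt, hψ, hσy, Matrix.trace, Matrix.diag_apply, Matrix.mul_apply,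
      Matrix.map_apply, Matrix.kroneckerMap_apply, Fintype.sum_prod_type,
      Fin.sum_univ_two, Matrix.of_apply, map_mul, map_neg,
      Complex.conj_conj, Matrix.cons_val', Matrix.cons_val_zero, Matrix.cons_val_one,
      Matrix.head_cons, Matrix.empty_val', Matrix.cons_val_fin_one, Matrix.head_fin_const]
    ring_nf
    linear_combination (4:ℂ) * hkey +
      (4 * (Complex.I ^ 2 - 1) * (a ^ 2 * (starRingEnd ℂ) a ^ 2 + a ^ 2 * (starRingEnd ℂ) b ^ 2 +
        (starRingEnd ℂ) a ^ 2 * b ^ 2 + (starRingEnd ℂ) b ^ 2 * b ^ 2)) * Complex.I_sq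
  · -- rank
    have hfac : ρ = (Matrix.of fun p (_ : Fin 1) => ψ p) *
        (Matrix.of fun (_ : Fin 1) q => (starRingEnd ℂ) (ψ q)) := by
      rw [hρ]; ext p q
      simp [Matrix.mul_apply]
    calc (ρ * ρt).rank ≤ ρ.rank := Matrix.rank_mul_le_left ρ ρt
      _ ≤ _ := by
          rw [hfac]
          exact le_trans (Matrix.rank_mul_le_left _ _)
            (le_trans (Matrix.rank_le_card_width _) (by simp))
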